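/- Let θ be uniformly distributed on [0, π] and let d > 0 be fixed. Then E[exp(−g(d,θ)/2)] = (2/π)·e^{−d/2}·K(√(1 − e^{−2d})), where g(d,θ) = log(cosh(d) − sinh(d)·cos(θ)) and K is the complete elliptic integral of the first kind K(k) = ∫₀^{π/2} (1 − k²·sin²(φ))^{−1/2} dφ. -/
import Mathlib


/-- The complete elliptic integral of the first kind. -/
noncomputable def ellipticK (k : ℝ) : ℝ :=
  ∫ φ in (0:ℝ)..(Real.pi / 2), (Real.sqrt (1 - k ^ 2 * Real.sin φ ^ 2))⁻¹

/-- The asymptotic distance increment `g(d,θ) = log(cosh d − sinh d · cos θ)`. -/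
noncomputable def g (d θ : ℝ) : ℝ := Real.log (Real.cosh d - Real.sinh d * Real.cos θ)

/-- For `θ` uniform on `[0,π]`,
`E[exp(−g(d,θ)/2)] = (2/π) e^{−d/2} K(√(1−e^{−2d}))`. -/
theorem expectation_exp_neg_half_g (d : ℝ) (hd : 0 < d) :
    (Real.pi)⁻¹ * ∫ θ in (0:ℝ)..Real.pi, Real.exp (-(g d θ) / 2) =
      2 / Real.pi * Real.exp (-d / 2) * ellipticK (Real.sqrt (1 - Real.exp (-2 * d))) := by
  have hs : 0 < Real.sinh d := Real.sinh_pos_iff.mpr hd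
  have hpos : ∀ θ : ℝ, 0 < Real.cosh d - Real.sinh d * Real.cos θ := by
    intro θ
    have h1 : Real.sinh d * Real.cos θ ≤ Real.sinh d * 1 :=
      mul_le_mul_of_nonneg_left (Real.cos_le_one θ) hs.le
    have h2 : Real.cosh d - Real.sinh d = Real.exp (-d) := Real.cosh_sub_sinh d
    have h3 := Real.exp_pos (-d)
    linarith
  have hexp : ∀ θ : ℝ, Real.exp (-(g d θ) / 2) =
      (Real.sqrt (Real.cosh d - Real.sinh d * Real.cos θ))⁻¹ := by
    intro θ
    rw [g, Real.sqrt_eq_rpow, ← Real.rpow_neg_one, ← Real.rpow_mul (hpos θ).le,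
      Real.rpow_def_of_pos (hpos θ)]
    ring_nf
  -- key pointwise identity after substitution θ = π - 2φ
  have hk2 : (0:ℝ) ≤ 1 - Real.exp (-2 * d) := by
    have : Real.exp (-2 * d) ≤ Real.exp 0 := Real.exp_le_exp.mpr (by linarith)
    simpa using this
  have hsq : Real.sqrt (1 - Real.exp (-2 * d)) ^ 2 = 1 - Real.exp (-2 * d) :=
    Real.sq_sqrt hk2
  have hptw : ∀ φ : ℝ,
      (Real.sqrt (Real.cosh d - Real.sinh d * Real.cos (Real.pi - 2 * φ)))⁻¹ =
      Real.exp (-d / 2) *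
        (Real.sqrt (1 - Real.sqrt (1 - Real.exp (-2 * d)) ^ 2 * Real.sin φ ^ 2))⁻¹ := by
    intro φ
    have hab : Real.exp d * Real.exp (-d) = 1 := by
      rw [← Real.exp_add]; simp
    have h2 : Real.exp (-2 * d) = Real.exp (-d) * Real.exp (-d) := by
      rw [← Real.exp_add]; ring_nf
    have hinner : Real.cosh d - Real.sinh d * Real.cos (Real.pi - 2 * φ)
        = Real.exp d * (1 - (1 - Real.exp (-2 * d)) * Real.sin φ ^ 2) := by
      rw [Real.cos_pi_sub, Real.cos_two_mul, Real.cosh_eq, Real.sinh_eq, h2]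
      have hsin : Real.sin φ ^ 2 = 1 - Real.cos φ ^ 2 := Real.sin_sq φ
      linear_combination (Real.exp d - Real.exp (-d)) * hsin -
        Real.exp (-d) * Real.sin φ ^ 2 * hab
    rw [hsq, hinner, Real.sqrt_mul (Real.exp_pos d).le, mul_inv]
    congr 1
    rw [show Real.exp d = Real.exp (d / 2) ^ 2 by rw [sq, ← Real.exp_add]; ring_nf,
      Real.sqrt_sq (Real.exp_pos _).le, ← Real.exp_neg]
    ring_nf
  calc (Real.pi)⁻¹ * ∫ θ in (0:ℝ)..Real.pi, Real.exp (-(g d θ) / 2)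
      = (Real.pi)⁻¹ * ∫ θ in (0:ℝ)..Real.pi,
          (Real.sqrt (Real.cosh d - Real.sinh d * Real.cos θ))⁻¹ := by
        simp only [hexp]
    _ = (Real.pi)⁻¹ * (2 * ∫ φ in (0:ℝ)..(Real.pi/2),
          (Real.sqrt (Real.cosh d - Real.sinh d * Real.cos (Real.pi - 2 * φ)))⁻¹) := by
        have h1 := intervalIntegral.integral_comp_mul_left (a := 0) (b := Real.pi/2)
          (fun x => (Real.sqrt (Real.cosh d - Real.sinh d * Real.cos (Real.pi - x)))⁻¹)
          (c := 2) two_ne_zero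
        have h2 := intervalIntegral.integral_comp_sub_left (a := 0) (b := Real.pi)
          (fun x => (Real.sqrt (Real.cosh d - Real.sinh d * Real.cos x))⁻¹) Real.pi
        simp only [mul_zero, sub_zero, sub_self, smul_eq_mul,
          show (2:ℝ) * (Real.pi/2) = Real.pi by ring] at h1 h2
        rw [h1, h2]
        ring
    _ = 2 / Real.pi * Real.exp (-d / 2) *
          ellipticK (Real.sqrt (1 - Real.exp (-2 * d))) := by
        simp only [hptw]
        rw [intervalIntegral.integral_const_mul, ellipticK]
        ring
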